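/- The κ-Minkowski star product ⋆ on the polynomial algebra A is associative: for all f, g, h ∈ A, (f ⋆ g) ⋆ h = f ⋆ (g ⋆ h). -/

import Mathlib

open MvPolynomial Finset

/-- Iterated partial derivative along a list of variable indices. -/
noncomputable def pdList {σ : Type*} [DecidableEq σ] (l : List σ)
    (f : MvPolynomial σ ℝ) : MvPolynomial σ ℝ :=
  l.foldr (fun i h => pderiv i h) f

/-- The `n`-th order operator `g ↦ Σ_{μ_1,…,μ_n} x^{μ_1}⋯x^{μ_n} ∂_{μ_1}⋯∂_{μ_n} g`. -/
noncomputable def multiEuler (d n : ℕ) (g : MvPolynomial (Fin (d + 1)) ℝ) :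
    MvPolynomial (Fin (d + 1)) ℝ :=
  ∑ μ : Fin n → Fin (d + 1), (∏ j : Fin n, X (μ j)) * pdList (List.ofFn μ) g

/-- The κ-Minkowski star product on `A = ℝ[x⁰,…,x^d]`:
`f ⋆ g = Σ_{n≥0} (θⁿ/n!) (∂₀ⁿ f) · (Σ_{μ_1,…,μ_n} x^{μ_1}⋯x^{μ_n} ∂_{μ_1}⋯∂_{μ_n} g)`;
on polynomials only finitely many terms are nonzero, so the sum is a `finsum`. -/
noncomputable def kstar (d : ℕ) (θ : ℝ)
    (f g : MvPolynomial (Fin (d + 1)) ℝ) : MvPolynomial (Fin (d + 1)) ℝ :=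
  ∑ᶠ n : ℕ, (θ ^ n / (n.factorial : ℝ)) •
    ((fun h => pderiv (0 : Fin (d + 1)) h)^[n] f * multiEuler d n g)


section Lemmas
variable {σ : Type*} [DecidableEq σ]

@[simp] lemma pdList_nil (f : MvPolynomial σ ℝ) : pdList [] f = f := rfl

@[simp] lemma pdList_cons (a : σ) (l : List σ) (f : MvPolynomial σ ℝ) :
    pdList (a :: l) f = pderiv a (pdList l f) := rfl

lemma pderiv_pderiv (i j : σ) (f : MvPolynomial σ ℝ) :
    pderiv i (pderiv j f) = pderiv j (pderiv i f) := by
  induction f using MvPolynomial.induction_on' with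
  | monomial s r =>
    simp only [pderiv_monomial]
    by_cases hij : i = j
    · subst hij; rfl
    · have h1 : (s - Finsupp.single j 1 : σ →₀ ℕ) i = s i := by
        rw [Finsupp.tsub_apply, Finsupp.single_apply, if_neg (Ne.symm hij)]; rfl
      have h2 : (s - Finsupp.single i 1 : σ →₀ ℕ) j = s j := by
        rw [Finsupp.tsub_apply, Finsupp.single_apply, if_neg hij]; rfl
      rw [h1, h2, tsub_tsub, tsub_tsub, add_comm, mul_right_comm]
  | add p q hp hq => simp [hp, hq]

lemma pdList_pderiv (l : List σ) (a : σ) (f : MvPolynomial σ ℝ) :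
    pdList l (pderiv a f) = pderiv a (pdList l f) := by
  induction l with
  | nil => rfl
  | cons i l ih => rw [pdList_cons, pdList_cons, ih, pderiv_pderiv]

@[simp] lemma pdList_zero (l : List σ) : pdList l (0 : MvPolynomial σ ℝ) = 0 := by
  induction l with
  | nil => rfl
  | cons i l ih => rw [pdList_cons, ih, map_zero]

lemma pdList_add (l : List σ) (f g : MvPolynomial σ ℝ) :
    pdList l (f + g) = pdList l f + pdList l g := by
  induction l with
  | nil => rfl
  | cons i l ih => rw [pdList_cons, ih, map_add]; rfl

lemma pdList_smul (l : List σ) (c : ℝ) (f : MvPolynomial σ ℝ) :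
    pdList l (c • f) = c • pdList l f := by
  induction l with
  | nil => rfl
  | cons i l ih => rw [pdList_cons, ih, Derivation.map_smul]; rfl

end Lemmas

variable {d : ℕ}

@[simp] lemma multiEuler_zero (n : ℕ) : multiEuler d n 0 = 0 := by
  simp [multiEuler]

lemma multiEuler_add (n : ℕ) (f g : MvPolynomial (Fin (d + 1)) ℝ) :
    multiEuler d n (f + g) = multiEuler d n f + multiEuler d n g := by
  simp [multiEuler, pdList_add, mul_add, Finset.sum_add_distrib]

lemma multiEuler_smul (n : ℕ) (c : ℝ) (f : MvPolynomial (Fin (d + 1)) ℝ) :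
    multiEuler d n (c • f) = c • multiEuler d n f := by
  simp [multiEuler, pdList_smul, mul_smul_comm, Finset.smul_sum]

lemma multiEuler_succ (n : ℕ) (g : MvPolynomial (Fin (d + 1)) ℝ) :
    multiEuler d (n + 1) g = ∑ a : Fin (d + 1), X a * multiEuler d n (pderiv a g) := by
  rw [multiEuler]
  rw [← Equiv.sum_comp (Fin.consEquiv (fun _ : Fin (n+1) => Fin (d + 1)))]
  rw [Fintype.sum_prod_type]
  refine Finset.sum_congr rfl fun a _ => ?_
  rw [multiEuler, Finset.mul_sum]
  refine Finset.sum_congr rfl fun ν _ => ?_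
  have hofn : List.ofFn (Fin.consEquiv (fun _ : Fin (n+1) => Fin (d+1)) (a, ν)) =
      a :: List.ofFn ν := by
    simp [Fin.consEquiv, List.ofFn_succ]
  rw [hofn, pdList_cons, ← pdList_pderiv]
  have hprod : (∏ j : Fin (n+1), X ((Fin.consEquiv (fun _ : Fin (n+1) => Fin (d+1)) (a, ν)) j) : MvPolynomial (Fin (d+1)) ℝ)
      = X a * ∏ j : Fin n, X (ν j) := by
    rw [Fin.prod_univ_succ]
    simp [Fin.consEquiv]
  rw [hprod]
  ring

lemma multiEuler_monomial (n : ℕ) (s : Fin (d + 1) →₀ ℕ) (r : ℝ) :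
    multiEuler d n (monomial s r)
      = (((s.sum fun _ e => e).descFactorial n : ℕ) : ℝ) • monomial s r := by
  induction n generalizing s r with
  | zero =>
    simp [multiEuler]
  | succ n ih =>
    rw [multiEuler_succ]
    have key : ∀ a : Fin (d + 1),
        X a * multiEuler d n (pderiv a (monomial s r))
          = ((s a : ℝ) * (((s.sum fun _ e => e) - 1).descFactorial n : ℕ)) • monomial s r := by
      intro a
      rw [pderiv_monomial, ih]
      by_cases ha : s a = 0
      · simp [ha]
      · have hle : Finsupp.single a 1 ≤ s := Finsupp.single_le_iff.mpr (Nat.one_le_iff_ne_zero.mpr ha)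
        have hsum : ((s - Finsupp.single a 1 : Fin (d+1) →₀ ℕ).sum fun _ e => e)
            = (s.sum fun _ e => e) - 1 := by
          have hh : (s.sum fun _ e => e)
              = ((s - Finsupp.single a 1 : Fin (d+1) →₀ ℕ).sum fun _ e => e) + 1 := by
            conv_lhs => rw [← tsub_add_cancel_of_le hle]
            rw [Finsupp.sum_add_index' (fun _ => rfl) (fun _ _ _ => rfl),
              Finsupp.sum_single_index rfl]
          omega
        rw [hsum]
        rw [mul_smul_comm]
        have hXmul : X a * monomial (s - Finsupp.single a 1) (r * (s a : ℝ))
            = (s a : ℝ) • monomial s r := by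
          rw [X, monomial_mul, smul_monomial]
          rw [add_tsub_cancel_of_le hle, smul_eq_mul]
          ring_nf
        rw [hXmul, smul_comm]
        rw [smul_smul]
    rw [Finset.sum_congr rfl fun a _ => key a]
    rw [← Finset.sum_smul, ← Finset.sum_mul]
    have hsa : (∑ a : Fin (d+1), (s a : ℝ)) = ((s.sum fun _ e => e : ℕ) : ℝ) := by
      rw [Finsupp.sum_fintype _ _ (fun _ => rfl)]
      push_cast; rfl
    rw [hsa]
    rcases Nat.eq_zero_or_pos (s.sum fun _ e => e) with h0 | hpos
    · simp [h0]
    · congr 1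
      obtain ⟨B, hB⟩ := Nat.exists_eq_add_of_lt hpos
      rw [hB]
      simp only [Nat.zero_add] at *
      rw [Nat.succ_descFactorial_succ, Nat.add_sub_cancel]
      push_cast; ring


lemma multiEuler_sum {ι : Type*} (n : ℕ) (S : Finset ι) (F : ι → MvPolynomial (Fin (d+1)) ℝ) :
    multiEuler d n (∑ i ∈ S, F i) = ∑ i ∈ S, multiEuler d n (F i) :=
  map_sum (AddMonoidHom.mk' (multiEuler d n) (multiEuler_add n)) F S

lemma multiEuler_eq_zero {n : ℕ} {g : MvPolynomial (Fin (d + 1)) ℝ}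
    (hg : g.totalDegree < n) : multiEuler d n g = 0 := by
  conv_lhs => rw [g.as_sum]
  rw [multiEuler_sum]
  refine Finset.sum_eq_zero fun v hv => ?_
  rw [multiEuler_monomial]
  have : (v.sum fun _ e => e) ≤ g.totalDegree := le_totalDegree hv
  rw [Nat.descFactorial_of_lt (by omega)]
  simp

lemma iterD_add (n : ℕ) (f g : MvPolynomial (Fin (d+1)) ℝ) :
    (fun h => pderiv (0 : Fin (d + 1)) h)^[n] (f + g)
      = (fun h => pderiv (0 : Fin (d + 1)) h)^[n] f
        + (fun h => pderiv (0 : Fin (d + 1)) h)^[n] g := by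
  induction n generalizing f g with
  | zero => rfl
  | succ n ih => simp only [Function.iterate_succ_apply', ih, map_add]

lemma iterD_smul (n : ℕ) (c : ℝ) (f : MvPolynomial (Fin (d+1)) ℝ) :
    (fun h => pderiv (0 : Fin (d + 1)) h)^[n] (c • f)
      = c • (fun h => pderiv (0 : Fin (d + 1)) h)^[n] f := by
  induction n generalizing f with
  | zero => rfl
  | succ n ih => simp only [Function.iterate_succ_apply', ih, Derivation.map_smul]

@[simp] lemma iterD_zero (n : ℕ) :
    (fun h => pderiv (0 : Fin (d + 1)) h)^[n] (0 : MvPolynomial (Fin (d+1)) ℝ) = 0 := by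
  induction n with
  | zero => rfl
  | succ n ih => simp only [Function.iterate_succ_apply', ih, map_zero]

lemma kstar_eq_sum (θ : ℝ) (f g : MvPolynomial (Fin (d + 1)) ℝ) {N : ℕ}
    (hN : g.totalDegree < N) :
    kstar d θ f g = ∑ n ∈ Finset.range N, (θ ^ n / (n.factorial : ℝ)) •
      ((fun h => pderiv (0 : Fin (d + 1)) h)^[n] f * multiEuler d n g) := by
  apply finsum_eq_finset_sum_of_support_subset
  intro n hn
  simp only [Function.mem_support, ne_eq] at hn
  by_contra hmem
  simp only [Finset.coe_range, Set.mem_Iio, not_lt] at hmem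
  exact hn (by rw [multiEuler_eq_zero (lt_of_lt_of_le hN hmem), mul_zero, smul_zero])

lemma kstar_add_right (θ : ℝ) (f g h : MvPolynomial (Fin (d + 1)) ℝ) :
    kstar d θ f (g + h) = kstar d θ f g + kstar d θ f h := by
  set N := max g.totalDegree h.totalDegree + 1 with hNdef
  have h1 : g.totalDegree < N := by omega
  have h2 : h.totalDegree < N := by omega
  have h3 : (g + h).totalDegree < N :=
    lt_of_le_of_lt (totalDegree_add g h) (by omega)
  rw [kstar_eq_sum θ f g h1, kstar_eq_sum θ f h h2, kstar_eq_sum θ f _ h3,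
    ← Finset.sum_add_distrib]
  exact Finset.sum_congr rfl fun n _ => by rw [multiEuler_add, mul_add, smul_add]

lemma kstar_zero_right (θ : ℝ) (f : MvPolynomial (Fin (d + 1)) ℝ) :
    kstar d θ f 0 = 0 := by
  rw [kstar_eq_sum θ f 0 (N := 1) (by simp)]
  simp

lemma kstar_smul_right (θ : ℝ) (c : ℝ) (f g : MvPolynomial (Fin (d + 1)) ℝ) :
    kstar d θ f (c • g) = c • kstar d θ f g := by
  have h1 : g.totalDegree < g.totalDegree + 1 := by omega
  have h2 : (c • g).totalDegree < g.totalDegree + 1 :=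
    lt_of_le_of_lt (totalDegree_smul_le c g) h1
  rw [kstar_eq_sum θ f _ h2, kstar_eq_sum θ f g h1, Finset.smul_sum]
  exact Finset.sum_congr rfl fun n _ => by
    rw [multiEuler_smul, mul_smul_comm, smul_comm]

lemma kstar_add_left (θ : ℝ) (f g h : MvPolynomial (Fin (d + 1)) ℝ) :
    kstar d θ (f + g) h = kstar d θ f h + kstar d θ g h := by
  have h1 : h.totalDegree < h.totalDegree + 1 := by omega
  rw [kstar_eq_sum θ _ h h1, kstar_eq_sum θ f h h1, kstar_eq_sum θ g h h1,
    ← Finset.sum_add_distrib]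
  exact Finset.sum_congr rfl fun n _ => by rw [iterD_add, add_mul, smul_add]

lemma kstar_zero_left (θ : ℝ) (h : MvPolynomial (Fin (d + 1)) ℝ) :
    kstar d θ 0 h = 0 := by
  have h1 : h.totalDegree < h.totalDegree + 1 := by omega
  rw [kstar_eq_sum θ _ h h1]
  simp

lemma kstar_smul_left (θ : ℝ) (c : ℝ) (f h : MvPolynomial (Fin (d + 1)) ℝ) :
    kstar d θ (c • f) h = c • kstar d θ f h := by
  have h1 : h.totalDegree < h.totalDegree + 1 := by omega
  rw [kstar_eq_sum θ _ h h1, kstar_eq_sum θ f h h1, Finset.smul_sum]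
  exact Finset.sum_congr rfl fun n _ => by
    rw [iterD_smul, smul_mul_assoc, smul_comm]

lemma kstar_sum_right {ι : Type*} (θ : ℝ) (f : MvPolynomial (Fin (d + 1)) ℝ)
    (S : Finset ι) (F : ι → MvPolynomial (Fin (d+1)) ℝ) :
    kstar d θ f (∑ i ∈ S, F i) = ∑ i ∈ S, kstar d θ f (F i) := by
  classical
  induction S using Finset.cons_induction with
  | empty => simpa using kstar_zero_right θ f
  | cons a S ha ih => rw [Finset.sum_cons, Finset.sum_cons, kstar_add_right, ih]

lemma kstar_sum_left {ι : Type*} (θ : ℝ) (h : MvPolynomial (Fin (d + 1)) ℝ)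
    (S : Finset ι) (F : ι → MvPolynomial (Fin (d+1)) ℝ) :
    kstar d θ (∑ i ∈ S, F i) h = ∑ i ∈ S, kstar d θ (F i) h := by
  classical
  induction S using Finset.cons_induction with
  | empty => simpa using kstar_zero_left θ h
  | cons a S ha ih => rw [Finset.sum_cons, Finset.sum_cons, kstar_add_left, ih]

lemma iterD_monomial (k : ℕ) (s : Fin (d+1) →₀ ℕ) (r : ℝ) :
    (fun h => pderiv (0 : Fin (d + 1)) h)^[k] (monomial s r)
      = (((s 0).descFactorial k : ℕ) : ℝ) • monomial (s - Finsupp.single 0 k) r := by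
  induction k with
  | zero => simp
  | succ k ih =>
    rw [Function.iterate_succ_apply', ih, Derivation.map_smul, pderiv_monomial]
    have h0 : (s - Finsupp.single 0 k : Fin (d+1) →₀ ℕ) 0 = s 0 - k := by
      rw [Finsupp.tsub_apply, Finsupp.single_eq_same]
    have hs : (s - Finsupp.single 0 k - Finsupp.single 0 1 : Fin (d+1) →₀ ℕ)
        = s - Finsupp.single 0 (k+1) := by
      rw [tsub_tsub, ← Finsupp.single_add]
    rw [h0, hs]
    rw [show (monomial (s - Finsupp.single 0 (k+1)) (r * ((s 0 - k : ℕ) : ℝ)))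
        = ((s 0 - k : ℕ) : ℝ) • monomial (s - Finsupp.single 0 (k+1)) r by
      rw [smul_monomial, smul_eq_mul, mul_comm]]
    rw [smul_smul, Nat.descFactorial_succ]
    push_cast
    ring_nf

lemma iterD_leibniz (m : ℕ) (p q : MvPolynomial (Fin (d+1)) ℝ) :
    (fun h => pderiv (0 : Fin (d + 1)) h)^[m] (p * q)
      = ∑ j ∈ Finset.range (m+1), ((m.choose j : ℕ) : ℝ) •
          ((fun h => pderiv (0 : Fin (d + 1)) h)^[j] p
            * (fun h => pderiv (0 : Fin (d + 1)) h)^[m-j] q) := by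
  set D := fun h : MvPolynomial (Fin (d+1)) ℝ => pderiv (0 : Fin (d + 1)) h with hD
  induction m with
  | zero => simp
  | succ m ih =>
    rw [Function.iterate_succ_apply', ih]
    have hmap : D (∑ j ∈ Finset.range (m+1), ((m.choose j : ℕ) : ℝ) • (D^[j] p * D^[m-j] q))
        = ∑ j ∈ Finset.range (m+1), ((m.choose j : ℕ) : ℝ) •
            (D^[j+1] p * D^[m-j] q + D^[j] p * D^[m-j+1] q) := by
      show pderiv (R := ℝ) (0 : Fin (d+1)) _ = _
      rw [map_sum (pderiv (R := ℝ) (0 : Fin (d+1)))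
        (fun j => ((m.choose j : ℕ) : ℝ) • (D^[j] p * D^[m-j] q)) (Finset.range (m+1))]
      refine Finset.sum_congr rfl fun j _ => ?_
      rw [Derivation.map_smul, pderiv_mul]
      rw [← Function.iterate_succ_apply' (fun h => pderiv (0 : Fin (d + 1)) h) j p,
        ← Function.iterate_succ_apply' (fun h => pderiv (0 : Fin (d + 1)) h) (m-j) q]
    rw [hmap]
    simp only [smul_add, Finset.sum_add_distrib]
    -- target : split
    rw [Finset.sum_range_succ' (fun j => ((Nat.choose (m+1) j : ℕ) : ℝ) • (D^[j] p * D^[m+1-j] q)) (m+1)]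
    have e1 : ∑ j ∈ Finset.range (m+1), (((m+1).choose (j+1) : ℕ) : ℝ) • (D^[j+1] p * D^[m+1-(j+1)] q)
        = ∑ j ∈ Finset.range (m+1), (((m.choose j : ℕ) : ℝ) • (D^[j+1] p * D^[m-j] q)
            + ((m.choose (j+1) : ℕ) : ℝ) • (D^[j+1] p * D^[m-j] q)) := by
      refine Finset.sum_congr rfl fun j hj => ?_
      rw [Nat.choose_succ_succ, Nat.cast_add, add_smul]
      congr 2 <;> rw [show m + 1 - (j+1) = m - j by omega]
    rw [e1, Finset.sum_add_distrib]
    have e2 : ∑ j ∈ Finset.range (m+1), ((m.choose (j+1) : ℕ) : ℝ) • (D^[j+1] p * D^[m-j] q)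
          + (((m+1).choose 0 : ℕ) : ℝ) • (D^[0] p * D^[m+1-0] q)
        = ∑ j ∈ Finset.range (m+1), ((m.choose j : ℕ) : ℝ) • (D^[j] p * D^[m-j+1] q) := by
      have e3 := Finset.sum_range_succ' (fun j => ((m.choose j : ℕ) : ℝ) • (D^[j] p * D^[m+1-j] q)) (m+1)
      have e4 : ∑ j ∈ Finset.range (m+1+1), ((m.choose j : ℕ) : ℝ) • (D^[j] p * D^[m+1-j] q)
          = ∑ j ∈ Finset.range (m+1), ((m.choose j : ℕ) : ℝ) • (D^[j] p * D^[m-j+1] q) := by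
        rw [Finset.sum_range_succ]
        rw [Nat.choose_eq_zero_of_lt (by omega)]
        simp only [Nat.cast_zero, zero_smul, add_zero]
        refine Finset.sum_congr rfl fun j hj => ?_
        simp only [Finset.mem_range] at hj
        rw [show m + 1 - j = m - j + 1 by omega]
      rw [← e4, e3]
      congr 1
      · refine Finset.sum_congr rfl fun j hj => ?_
        rw [show m + 1 - (j+1) = m - j by omega]
      · norm_num
    rw [add_assoc, e2]

lemma kstar_monomial (θ : ℝ) (f : MvPolynomial (Fin (d + 1)) ℝ)
    (s : Fin (d+1) →₀ ℕ) (r : ℝ) {N : ℕ} (hN : (s.sum fun _ e => e) < N) :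
    kstar d θ f (monomial s r) = ∑ n ∈ Finset.range N,
      (((s.sum fun _ e => e).choose n : ℕ) : ℝ) • θ ^ n •
        ((fun h => pderiv (0 : Fin (d + 1)) h)^[n] f * monomial s r) := by
  have hdeg : (monomial s r).totalDegree < N :=
    lt_of_le_of_lt (totalDegree_monomial_le s r) hN
  rw [kstar_eq_sum θ f _ hdeg]
  refine Finset.sum_congr rfl fun n _ => ?_
  rw [multiEuler_monomial, mul_smul_comm, smul_smul, smul_smul]
  congr 1
  rw [Nat.descFactorial_eq_factorial_mul_choose]
  have hfac : ((n.factorial : ℕ) : ℝ) ≠ 0 := Nat.cast_ne_zero.mpr n.factorial_ne_zero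
  push_cast
  field_simp

lemma choose_mul_choose' (c q j : ℕ) :
    c.choose (q + j) * (q + j).choose j = c.choose q * (c - q).choose j := by
  by_cases hj : q + j ≤ c
  · have h1 : (q + j).choose j = (q + j).choose q := (Nat.choose_symm_add).symm ▸ by
      rw [Nat.add_comm q j, Nat.choose_symm_add]
    rw [h1, Nat.choose_mul (Nat.le_add_right q j), Nat.add_sub_cancel_left]
  · push_neg at hj
    rw [Nat.choose_eq_zero_of_lt hj, Nat.zero_mul]
    by_cases hq : q ≤ c
    · rw [Nat.choose_eq_zero_of_lt (show c - q < j by omega), Nat.mul_zero]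
    · rw [Nat.choose_eq_zero_of_lt (show c < q by omega), Nat.zero_mul]

lemma binom_key (b c p q : ℕ) :
    ∑ j ∈ Finset.range (p+1), b.choose (p-j) * (c.choose (q+j) * (q+j).choose j)
      = c.choose q * (b + c - q).choose p := by
  by_cases hq : q ≤ c
  · have e1 : ∀ j, b.choose (p-j) * (c.choose (q+j) * (q+j).choose j)
        = c.choose q * ((c-q).choose j * b.choose (p-j)) := fun j => by
      rw [choose_mul_choose']; ring
    rw [Finset.sum_congr rfl fun j _ => e1 j, ← Finset.mul_sum]
    congr 1
    have hv : (b + c - q) = (c - q) + b := by omega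
    rw [hv, Nat.add_choose_eq, Finset.Nat.sum_antidiagonal_eq_sum_range_succ_mk]
  · push_neg at hq
    rw [Nat.choose_eq_zero_of_lt hq, Nat.zero_mul]
    refine Finset.sum_eq_zero fun j _ => ?_
    rw [Nat.choose_eq_zero_of_lt (show c < q + j by omega), Nat.zero_mul, Nat.mul_zero]

lemma sum_sub_single_zero (s : Fin (d+1) →₀ ℕ) (m : ℕ) (hm : m ≤ s 0) :
    ((s - Finsupp.single 0 m : Fin (d+1) →₀ ℕ).sum fun _ e => e)
      = (s.sum fun _ e => e) - m := by
  have hle : (Finsupp.single 0 m : Fin (d+1) →₀ ℕ) ≤ s := Finsupp.single_le_iff.mpr hm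
  have hh : (s.sum fun _ e => e)
      = ((s - Finsupp.single 0 m : Fin (d+1) →₀ ℕ).sum fun _ e => e) + m := by
    conv_lhs => rw [← tsub_add_cancel_of_le hle]
    rw [Finsupp.sum_add_index' (fun _ => rfl) (fun _ _ _ => rfl),
      Finsupp.sum_single_index rfl]
  omega

lemma sum_add_finsupp (u t : Fin (d+1) →₀ ℕ) :
    ((u + t).sum fun _ e => e) = (u.sum fun _ e => e) + (t.sum fun _ e => e) :=
  Finsupp.sum_add_index' (fun _ => rfl) (fun _ _ _ => rfl)

lemma s0_le_sum (s : Fin (d+1) →₀ ℕ) : s 0 ≤ s.sum fun _ e => e := by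
  rw [Finsupp.sum_fintype _ _ (fun _ => rfl)]
  exact Finset.single_le_sum (fun i _ => Nat.zero_le _) (Finset.mem_univ 0)

lemma kstar_assoc_monomial (θ : ℝ) (f : MvPolynomial (Fin (d + 1)) ℝ)
    (s t : Fin (d+1) →₀ ℕ) (r w : ℝ) :
    kstar d θ (kstar d θ f (monomial s r)) (monomial t w)
      = kstar d θ f (kstar d θ (monomial s r) (monomial t w)) := by
  set b := s.sum fun _ e => e with hb
  set c := t.sum fun _ e => e with hc
  set N := b + c + 1 with hN
  have hs0b : s 0 ≤ b := s0_le_sum s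
  set T : ℕ → ℕ → MvPolynomial (Fin (d+1)) ℝ := fun p q =>
    (fun h => pderiv (0 : Fin (d + 1)) h)^[p] f
      * monomial (s - Finsupp.single 0 q + t) (r * w) with hT
  -- RHS computation
  have hR : kstar d θ f (kstar d θ (monomial s r) (monomial t w))
      = ∑ q ∈ Finset.range N, ∑ p ∈ Finset.range N,
        (((c.choose q * ((s 0).descFactorial q * (b + c - q).choose p) : ℕ) : ℝ)
          * θ ^ (p + q)) • T p q := by
    rw [kstar_monomial θ (monomial s r) t w (N := N) (by omega)]
    rw [kstar_sum_right]
    refine Finset.sum_congr rfl fun q hq => ?_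
    simp only [Finset.mem_range] at hq
    rw [kstar_smul_right, kstar_smul_right]
    rw [iterD_monomial, smul_mul_assoc, monomial_mul, kstar_smul_right]
    by_cases hqs : q ≤ s 0
    · have husum : ((s - Finsupp.single 0 q + t : Fin (d+1) →₀ ℕ).sum fun _ e => e)
          = b + c - q := by
        rw [sum_add_finsupp, sum_sub_single_zero s q hqs, ← hb, ← hc]
        omega
      rw [kstar_monomial θ f _ _ (N := N) (by rw [husum]; omega), husum]
      rw [Finset.smul_sum, Finset.smul_sum, Finset.smul_sum]
      refine Finset.sum_congr rfl fun p hp => ?_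
      rw [hT]
      simp only [smul_smul]
      congr 1
      push_cast
      ring
    · push_neg at hqs
      rw [Nat.descFactorial_of_lt hqs]
      simp only [Nat.cast_zero, zero_smul, smul_zero, kstar_zero_right]
      symm
      refine Finset.sum_eq_zero fun p hp => ?_
      simp
  rw [hR]
  -- LHS computation, stage 1
  have hL1 : kstar d θ (kstar d θ f (monomial s r)) (monomial t w)
      = ∑ n ∈ Finset.range N, ∑ m ∈ Finset.range N, ∑ j ∈ Finset.range (m+1),
        (((b.choose n * (c.choose m * (m.choose j * (s 0).descFactorial (m-j))) : ℕ) : ℝ)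
          * θ ^ (n + m)) • T (n+j) (m-j) := by
    rw [kstar_monomial θ f s r (N := N) (by omega)]
    rw [kstar_sum_left]
    refine Finset.sum_congr rfl fun n hn => ?_
    rw [kstar_smul_left, kstar_smul_left]
    rw [kstar_monomial θ _ t w (N := N) (by omega)]
    simp only [Finset.smul_sum]
    refine Finset.sum_congr rfl fun m hm => ?_
    rw [iterD_leibniz m ((fun h => pderiv (0 : Fin (d + 1)) h)^[n] f) (monomial s r)]
    simp only [Finset.sum_mul, Finset.smul_sum]
    refine Finset.sum_congr rfl fun j hj => ?_
    rw [← Function.iterate_add_apply (fun h => pderiv (0 : Fin (d + 1)) h) j n f]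
    rw [iterD_monomial, hT]
    simp only [smul_mul_assoc, mul_smul_comm, mul_assoc, monomial_mul, smul_smul]
    rw [show j + n = n + j by omega]
    congr 1
    push_cast
    ring
  rw [hL1]
  -- stage 2 : extend j-range, then reorder sums to j, n, m
  have hL2 : (∑ n ∈ Finset.range N, ∑ m ∈ Finset.range N, ∑ j ∈ Finset.range (m+1),
        (((b.choose n * (c.choose m * (m.choose j * (s 0).descFactorial (m-j))) : ℕ) : ℝ)
          * θ ^ (n + m)) • T (n+j) (m-j))
      = ∑ j ∈ Finset.range N, ∑ n ∈ Finset.range N, ∑ m ∈ Finset.range N,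
        (((b.choose n * (c.choose m * (m.choose j * (s 0).descFactorial (m-j))) : ℕ) : ℝ)
          * θ ^ (n + m)) • T (n+j) (m-j) := by
    have e1 : ∀ n ∈ Finset.range N, ∑ m ∈ Finset.range N, ∑ j ∈ Finset.range (m+1),
          (((b.choose n * (c.choose m * (m.choose j * (s 0).descFactorial (m-j))) : ℕ) : ℝ)
            * θ ^ (n + m)) • T (n+j) (m-j)
        = ∑ m ∈ Finset.range N, ∑ j ∈ Finset.range N,
          (((b.choose n * (c.choose m * (m.choose j * (s 0).descFactorial (m-j))) : ℕ) : ℝ)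
            * θ ^ (n + m)) • T (n+j) (m-j) := by
      intro n hn
      refine Finset.sum_congr rfl fun m hm => ?_
      simp only [Finset.mem_range] at hm
      refine Finset.sum_subset (Finset.range_subset_range.mpr (by omega)) fun j hj hj' => ?_
      simp only [Finset.mem_range] at hj hj'
      rw [Nat.choose_eq_zero_of_lt (show m < j by omega)]
      simp
    rw [Finset.sum_congr rfl e1]
    rw [Finset.sum_congr rfl (fun n _ => Finset.sum_comm)]
    exact Finset.sum_comm
  rw [hL2]
  -- stage 3 : shift m = q + j
  have hL3 : (∑ j ∈ Finset.range N, ∑ n ∈ Finset.range N, ∑ m ∈ Finset.range N,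
        (((b.choose n * (c.choose m * (m.choose j * (s 0).descFactorial (m-j))) : ℕ) : ℝ)
          * θ ^ (n + m)) • T (n+j) (m-j))
      = ∑ j ∈ Finset.range N, ∑ n ∈ Finset.range N, ∑ q ∈ Finset.range N,
        (((b.choose n * (c.choose (q+j) * ((q+j).choose j * (s 0).descFactorial q)) : ℕ) : ℝ)
          * θ ^ (n + (q+j))) • T (n+j) q := by
    refine Finset.sum_congr rfl fun j hj => Finset.sum_congr rfl fun n hn => ?_
    simp only [Finset.mem_range] at hj hn
    conv_lhs => rw [Finset.range_eq_Ico]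
    rw [← Finset.sum_Ico_consecutive _ (Nat.zero_le j) (le_of_lt hj)]
    have hlow : ∑ m ∈ Finset.Ico 0 j,
        (((b.choose n * (c.choose m * (m.choose j * (s 0).descFactorial (m-j))) : ℕ) : ℝ)
          * θ ^ (n + m)) • T (n+j) (m-j) = 0 := by
      refine Finset.sum_eq_zero fun m hm => ?_
      simp only [Finset.mem_Ico] at hm
      rw [Nat.choose_eq_zero_of_lt (show m < j by omega)]
      simp
    rw [hlow, zero_add, Finset.sum_Ico_eq_sum_range]
    rw [Finset.sum_subset (Finset.range_subset_range.mpr (show N - j ≤ N by omega))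
      (fun q hq hq' => by
        simp only [Finset.mem_range] at hq hq'
        rw [Nat.choose_eq_zero_of_lt (show c < j + q by omega)]
        simp)]
    refine Finset.sum_congr rfl fun q hq => ?_
    rw [show j + q = q + j from Nat.add_comm j q, Nat.add_sub_cancel]
  rw [hL3]
  -- stage 4 : shift n = p - j (with indicator)
  have hL4 : (∑ j ∈ Finset.range N, ∑ n ∈ Finset.range N, ∑ q ∈ Finset.range N,
        (((b.choose n * (c.choose (q+j) * ((q+j).choose j * (s 0).descFactorial q)) : ℕ) : ℝ)
          * θ ^ (n + (q+j))) • T (n+j) q)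
      = ∑ j ∈ Finset.range N, ∑ q ∈ Finset.range N, ∑ p ∈ Finset.range N,
        (((if j ≤ p then
            b.choose (p-j) * (c.choose (q+j) * ((q+j).choose j * (s 0).descFactorial q))
          else 0 : ℕ) : ℝ) * θ ^ (p + q)) • T p q := by
    refine Finset.sum_congr rfl fun j hj => ?_
    simp only [Finset.mem_range] at hj
    rw [Finset.sum_comm]
    refine Finset.sum_congr rfl fun q hq => ?_
    have e1 : ∀ n ∈ Finset.range N,
        (((b.choose n * (c.choose (q+j) * ((q+j).choose j * (s 0).descFactorial q)) : ℕ) : ℝ)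
          * θ ^ (n + (q+j))) • T (n+j) q
        = (((if j ≤ j+n then
            b.choose ((j+n)-j) * (c.choose (q+j) * ((q+j).choose j * (s 0).descFactorial q))
          else 0 : ℕ) : ℝ) * θ ^ ((j+n) + q)) • T (j+n) q := by
      intro n hn
      rw [if_pos (Nat.le_add_right j n), Nat.add_sub_cancel_left,
        show (j+n) + q = n + (q+j) by omega, Nat.add_comm j n]
    rw [Finset.sum_congr rfl e1]
    set F : ℕ → MvPolynomial (Fin (d+1)) ℝ := fun p =>
        (((if j ≤ p then
            b.choose (p-j) * (c.choose (q+j) * ((q+j).choose j * (s 0).descFactorial q))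
          else 0 : ℕ) : ℝ) * θ ^ (p + q)) • T p q with hF
    have e2 := Finset.sum_Ico_eq_sum_range (f := F) (m := j) (n := N + j)
    rw [show N + j - j = N by omega] at e2
    rw [show (∑ n ∈ Finset.range N,
        (((if j ≤ j+n then
            b.choose ((j+n)-j) * (c.choose (q+j) * ((q+j).choose j * (s 0).descFactorial q))
          else 0 : ℕ) : ℝ) * θ ^ ((j+n) + q)) • T (j+n) q) = ∑ n ∈ Finset.range N, F (j+n)
      from rfl]
    rw [← e2]
    have e3 : ∑ p ∈ Finset.Ico j (N+j), F p = ∑ p ∈ Finset.range (N+j), F p := by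
      refine Finset.sum_subset (fun x hx => by
          simp only [Finset.mem_Ico] at hx; simp only [Finset.mem_range]; omega)
        (fun p hp hp' => ?_)
      simp only [Finset.mem_range] at hp
      simp only [Finset.mem_Ico] at hp'
      simp only [hF, if_neg (show ¬ j ≤ p by omega)]
      simp
    have e4 : ∑ p ∈ Finset.range N, F p = ∑ p ∈ Finset.range (N+j), F p := by
      refine Finset.sum_subset (Finset.range_subset_range.mpr (by omega)) (fun p hp hp' => ?_)
      simp only [Finset.mem_range] at hp hp'
      simp only [hF]
      by_cases hcq : c < q + j
      · rw [Nat.choose_eq_zero_of_lt hcq]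
        simp
      · rw [if_pos (show j ≤ p by omega)]
        rw [Nat.choose_eq_zero_of_lt (show b < p - j by omega)]
        simp
    rw [e3, ← e4]
  rw [hL4]
  -- stage 5 : reorder and apply the binomial identity
  rw [Finset.sum_comm]
  refine Finset.sum_congr rfl fun q hq => ?_
  simp only [Finset.mem_range] at hq
  rw [Finset.sum_comm]
  refine Finset.sum_congr rfl fun p hp => ?_
  simp only [Finset.mem_range] at hp
  rw [← Finset.sum_smul]
  congr 1
  rw [← Finset.sum_mul]
  congr 1
  rw [← Nat.cast_sum]
  congr 1
  have e5 : ∑ j ∈ Finset.range N, (if j ≤ p then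
        b.choose (p-j) * (c.choose (q+j) * ((q+j).choose j * (s 0).descFactorial q))
      else 0)
      = ∑ j ∈ Finset.range (p+1),
        b.choose (p-j) * (c.choose (q+j) * ((q+j).choose j * (s 0).descFactorial q)) := by
    rw [← Finset.sum_subset (Finset.range_subset_range.mpr (show p + 1 ≤ N by omega))
      (fun j hj hj' => by
        simp only [Finset.mem_range] at hj hj'
        rw [if_neg (show ¬ j ≤ p by omega)])]
    exact Finset.sum_congr rfl fun j hj => by
      simp only [Finset.mem_range] at hj
      rw [if_pos (show j ≤ p by omega)]
  rw [e5]
  have e6 : ∀ j, b.choose (p-j) * (c.choose (q+j) * ((q+j).choose j * (s 0).descFactorial q))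
      = (b.choose (p-j) * (c.choose (q+j) * ((q+j).choose j))) * (s 0).descFactorial q :=
    fun j => by ring
  rw [Finset.sum_congr rfl fun j _ => e6 j, ← Finset.sum_mul, binom_key]
  ring


/-- the κ-Minkowski star product is associative. -/
theorem kstar_assoc (d : ℕ) (hd : 1 ≤ d) (θ : ℝ)
    (f g h : MvPolynomial (Fin (d + 1)) ℝ) :
    kstar d θ (kstar d θ f g) h = kstar d θ f (kstar d θ g h) := by
  induction g using MvPolynomial.induction_on' with
  | monomial u a =>
    induction h using MvPolynomial.induction_on' with
    | monomial v e => exact kstar_assoc_monomial θ f u v a e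
    | add p q hp hq =>
      rw [kstar_add_right, kstar_add_right, hp, hq, ← kstar_add_right]
  | add p q hp hq =>
    rw [kstar_add_right, kstar_add_left, hp, hq, kstar_add_left, ← kstar_add_right]
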